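/- Let G be a 3-connected finite simple graph and let C be a non-interleaved cycle in G. Then C is an induced cycle of G, i.e., C has no chord: no edge of G joins two vertices of C that are not consecutive on C. -/

import Mathlib

open Finset

namespace BondPolytope

variable {V : Type*}

/-- The cut `δ(S)`: edges of `G` with exactly one endpoint in `S`. -/
def cut (G : SimpleGraph V) (S : Set V) : Set (Sym2 V) :=
  {e | e ∈ G.edgeSet ∧ ∃ u w, e = s(u, w) ∧ u ∈ S ∧ w ∉ S}

/-- A set of edges is a cut of `G`. -/
def IsCut (G : SimpleGraph V) (D : Set (Sym2 V)) : Prop :=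
  ∃ S : Set V, D = cut G S

/-- A set of edges is a bond of `G`: it is a cut `δ(S)` such that both sides induce
connected (possibly empty) subgraphs. -/
def IsBond (G : SimpleGraph V) (D : Set (Sym2 V)) : Prop :=
  ∃ S : Set V, D = cut G S ∧ (G.induce S).Preconnected ∧ (G.induce Sᶜ).Preconnected

open Classical in
/-- The indicator vector `x^δ ∈ ℝ^E` of a set `δ` of edges. -/
noncomputable def indVec (G : SimpleGraph V) (D : Set (Sym2 V)) : ↥G.edgeSet → ℝ :=
  fun e => if (e : Sym2 V) ∈ D then 1 else 0

/-- The bond polytope `BOND(G) ⊆ ℝ^E`. -/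
noncomputable def bondPolytope (G : SimpleGraph V) : Set (↥G.edgeSet → ℝ) :=
  convexHull ℝ {x | ∃ D, IsBond G D ∧ x = indVec G D}

/-- The cut polytope `CUT(G) ⊆ ℝ^E`. -/
noncomputable def cutPolytope (G : SimpleGraph V) : Set (↥G.edgeSet → ℝ) :=
  convexHull ℝ {x | ∃ D, IsCut G D ∧ x = indVec G D}

/-- `a^T x`. -/
noncomputable def dot {ι : Type*} [Fintype ι] (a x : ι → ℝ) : ℝ := ∑ i, a i * x i

/-- Affine dimension of a set of points. -/
noncomputable def affDim {W : Type*} [AddCommGroup W] [Module ℝ W] (s : Set W) : ℕ :=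
  Module.finrank ℝ ↥(vectorSpan ℝ s)

/-- `a^T x ≤ b` is facet-defining for `P`. -/
def IsFacet {ι : Type*} [Fintype ι] (P : Set (ι → ℝ)) (a : ι → ℝ) (b : ℝ) : Prop :=
  a ≠ 0 ∧ (∀ x ∈ P, dot a x ≤ b) ∧ {x ∈ P | dot a x = b}.Nonempty ∧
    affDim {x ∈ P | dot a x = b} + 1 = affDim P


/-- The cycle given by the closed walk `c` is interleaved: there are four vertices
appearing in this cyclic order along `c` that are connected crosswise by two
vertex-disjoint paths in `G - E(c)`. -/
def IsInterleaved (G : SimpleGraph V) {v : V} (c : G.Walk v v) : Prop :=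
  ∃ i₁ i₂ i₃ i₄ : ℕ, i₁ < i₂ ∧ i₂ < i₃ ∧ i₃ < i₄ ∧ i₄ < c.length ∧
    ∃ (q₁ : (G.deleteEdges {e | e ∈ c.edges}).Walk (c.getVert i₁) (c.getVert i₃))
      (q₂ : (G.deleteEdges {e | e ∈ c.edges}).Walk (c.getVert i₂) (c.getVert i₄)),
      q₁.IsPath ∧ q₂.IsPath ∧ ∀ x ∈ q₁.support, x ∉ q₂.support

/-- `G` is 3-connected: it has at least 4 vertices and deleting any at most 2 vertices
leaves it connected. -/
def ThreeConnected {V : Type*} [Fintype V] (G : SimpleGraph V) : Prop :=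
  4 ≤ Fintype.card V ∧ ∀ W : Set V, W.ncard ≤ 2 → (G.induce (Wᶜ : Set V)).Connected


section Aux
open SimpleGraph

private lemma support_getElem? {G : SimpleGraph V} {u w : V} (p : G.Walk u w) :
    ∀ n, n ≤ p.length → p.support[n]? = some (p.getVert n) := by
  induction p with
  | nil =>
    intro n hn
    simp only [Walk.length_nil, Nat.le_zero] at hn
    subst hn
    simp [Walk.getVert_zero]
  | cons h q ih =>
    intro n hn
    cases n with
    | zero => simp [Walk.support_cons, Walk.getVert_zero]
    | succ m =>
      rw [Walk.support_cons, List.getElem?_cons_succ, Walk.getVert_cons_succ]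
      exact ih m (by simpa using hn)

private lemma cycle_getVert_inj {G : SimpleGraph V} {v : V} {c : G.Walk v v} (hc : c.IsCycle)
    {t₁ t₂ : ℕ} (h₁ : t₁ < c.length) (h₂ : t₂ < c.length) (h : c.getVert t₁ = c.getVert t₂) :
    t₁ = t₂ := by
  have hn3 : 3 ≤ c.length := hc.three_le_length
  have htail : ∀ m, 1 ≤ m → m ≤ c.length → c.support.tail[m - 1]? = some (c.getVert m) := by
    intro m h1 h2
    have := support_getElem? c m h2
    rw [c.support_eq_cons] at this
    obtain ⟨k, rfl⟩ : ∃ k, m = k + 1 := ⟨m - 1, by omega⟩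
    simpa using this
  have hlen : c.support.tail.length = c.length := by
    have := c.length_support
    simp [List.length_tail, this]
  set f : ℕ → ℕ := fun t => if t = 0 then c.length else t with hf
  have hkey : ∀ t, t < c.length → c.support.tail[f t - 1]? = some (c.getVert t) := by
    intro t ht
    by_cases h0 : t = 0
    · subst h0
      simp only [hf, if_pos rfl]
      rw [htail c.length (by omega) le_rfl, Walk.getVert_length, Walk.getVert_zero]
    · simp only [hf, if_neg h0]
      exact htail t (by omega) (by omega)
  have h₁' := hkey t₁ h₁
  have h₂' := hkey t₂ h₂
  rw [h] at h₁'
  have heq : c.support.tail[f t₁ - 1]? = c.support.tail[f t₂ - 1]? := by rw [h₁', h₂']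
  have hfb : ∀ t, t < c.length → 1 ≤ f t ∧ f t ≤ c.length := by
    intro t ht; by_cases h0 : t = 0 <;> simp [hf, h0] <;> omega
  have hb₁ := hfb t₁ h₁
  have hb₂ := hfb t₂ h₂
  have := (List.getElem?_inj (by omega : f t₁ - 1 < c.support.tail.length) hc.support_nodup).1 heq
  by_cases e₁ : t₁ = 0 <;> by_cases e₂ : t₂ = 0 <;>
    simp only [hf, e₁, e₂, if_pos, if_neg, if_true, if_false] at this <;> omega

private lemma mem_edges_iff' {G : SimpleGraph V} {u w : V} (p : G.Walk u w) (e : Sym2 V) :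
    e ∈ p.edges ↔ ∃ t, t < p.length ∧ e = s(p.getVert t, p.getVert (t + 1)) := by
  induction p with
  | nil => simp
  | cons h q ih =>
    rw [Walk.edges_cons, List.mem_cons, ih]
    constructor
    · rintro (rfl | ⟨t, ht, rfl⟩)
      · exact ⟨0, by simp [Walk.length_cons], by
          rw [Walk.getVert_zero, Walk.getVert_cons_succ, Walk.getVert_zero]⟩
      · exact ⟨t + 1, by simp [Walk.length_cons]; omega, by
          rw [Walk.getVert_cons_succ, Walk.getVert_cons_succ]⟩
    · rintro ⟨t, ht, rfl⟩
      cases t with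
      | zero =>
        left
        rw [Walk.getVert_zero, Walk.getVert_cons_succ, Walk.getVert_zero]
      | succ m =>
        right
        exact ⟨m, by simp [Walk.length_cons] at ht; omega, by
          rw [Walk.getVert_cons_succ, Walk.getVert_cons_succ]⟩

private lemma exists_getVert_lt {G : SimpleGraph V} {v z : V} {c : G.Walk v v}
    (hl : 0 < c.length) (hz : z ∈ c.support) : ∃ t, t < c.length ∧ c.getVert t = z := by
  obtain ⟨t, hgt, htl⟩ := Walk.mem_support_iff_exists_getVert.1 hz
  rcases lt_or_eq_of_le htl with hlt | heq
  · exact ⟨t, hlt, hgt⟩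
  · refine ⟨0, hl, ?_⟩
    rw [Walk.getVert_zero]
    rw [heq, Walk.getVert_length] at hgt
    exact hgt


private lemma key {V : Type*} [Fintype V] [DecidableEq V]
    (G : SimpleGraph V) [DecidableRel G.Adj] (h3 : ThreeConnected G)
    (v : V) (c : G.Walk v v) (hc : c.IsCycle) (hni : ¬ IsInterleaved G c)
    (i j : ℕ) (hij : i < j) (hjn : j < c.length)
    (hadj : G.Adj (c.getVert i) (c.getVert j))
    (hne : s(c.getVert i, c.getVert j) ∉ c.edges) : False := by
  have hn3 : 3 ≤ c.length := hc.three_le_length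
  have inj : ∀ {t₁ t₂ : ℕ}, t₁ < c.length → t₂ < c.length →
      c.getVert t₁ = c.getVert t₂ → t₁ = t₂ :=
    fun h1 h2 h => cycle_getVert_inj hc h1 h2 h
  -- the two vertices are not consecutive
  have hij2 : i + 2 ≤ j := by
    by_contra hcon
    have hj1 : j = i + 1 := by omega
    exact hne ((mem_edges_iff' c _).2 ⟨i, by omega, by rw [hj1]⟩)
  -- not wrapping-consecutive
  have hB : 0 < i ∨ j + 2 ≤ c.length := by
    by_contra hcon
    push_neg at hcon
    obtain ⟨hi0, hjl⟩ := hcon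
    have hi0' : i = 0 := by omega
    have hjl' : j = c.length - 1 := by omega
    apply hne
    apply (mem_edges_iff' c _).2
    refine ⟨c.length - 1, by omega, ?_⟩
    have h1 : c.getVert (c.length - 1 + 1) = c.getVert i := by
      have : c.length - 1 + 1 = c.length := by omega
      rw [this, Walk.getVert_length, hi0', Walk.getVert_zero]
    rw [← h1, ← hjl', Sym2.eq_swap]
  -- the two sides of the cycle
  set SA : V → Prop := fun z => ∃ t, i < t ∧ t < j ∧ c.getVert t = z with hSA
  set SB : V → Prop := fun z => ∃ t, t < c.length ∧ (t < i ∨ j < t) ∧ c.getVert t = z with hSB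
  -- classification of cycle edges
  have ced : ∀ a b : V, s(a, b) ∈ c.edges → a ≠ c.getVert i → a ≠ c.getVert j →
      b ≠ c.getVert i → b ≠ c.getVert j → (SA a ∧ SA b) ∨ (SB a ∧ SB b) := by
    intro a b he hai haj hbi hbj
    obtain ⟨t, htn, hst⟩ := (mem_edges_iff' c _).1 he
    have hpair := Sym2.eq_iff.1 hst
    have h1 : c.getVert t ≠ c.getVert i ∧ c.getVert t ≠ c.getVert j ∧
        c.getVert (t + 1) ≠ c.getVert i ∧ c.getVert (t + 1) ≠ c.getVert j := by
      rcases hpair with ⟨ha, hb⟩ | ⟨ha, hb⟩ <;> subst ha <;> subst hb <;>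
        exact ⟨‹_›, ‹_›, ‹_›, ‹_›⟩
    obtain ⟨h1i, h1j, h2i, h2j⟩ := h1
    have hti : t ≠ i := fun h => h1i (by rw [h])
    have htj : t ≠ j := fun h => h1j (by rw [h])
    have hcl : (SA (c.getVert t) ∧ SA (c.getVert (t + 1))) ∨
        (SB (c.getVert t) ∧ SB (c.getVert (t + 1))) := by
      by_cases ht1 : t + 1 < c.length
      · have ht1i : t + 1 ≠ i := fun h => h2i (by rw [h])
        have ht1j : t + 1 ≠ j := fun h => h2j (by rw [h])
        rcases (by omega : t < i ∨ (i < t ∧ t < j) ∨ j < t) with h | h | h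
        · exact Or.inr ⟨⟨t, htn, Or.inl h, rfl⟩, ⟨t + 1, ht1, Or.inl (by omega), rfl⟩⟩
        · exact Or.inl ⟨⟨t, h.1, h.2, rfl⟩, ⟨t + 1, by omega, by omega, rfl⟩⟩
        · exact Or.inr ⟨⟨t, htn, Or.inr h, rfl⟩, ⟨t + 1, ht1, Or.inr (by omega), rfl⟩⟩
      · have htn' : t + 1 = c.length := by omega
        have hg : c.getVert (t + 1) = c.getVert 0 := by
          rw [htn', Walk.getVert_length, Walk.getVert_zero]
        have h0i : (0 : ℕ) ≠ i := fun h => h2i (by rw [hg, h])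
        exact Or.inr ⟨⟨t, htn, Or.inr (by omega), rfl⟩,
          ⟨0, by omega, Or.inl (by omega), hg.symm⟩⟩
    rcases hpair with ⟨ha, hb⟩ | ⟨ha, hb⟩ <;> subst ha <;> subst hb
    · exact hcl
    · exact hcl.imp And.symm And.symm
  -- the crossing extraction lemma
  have M : ∀ (a b : V) (w : G.Walk a b), SB b →
      (∀ z ∈ w.support, z ≠ c.getVert i ∧ z ≠ c.getVert j) →
      (∃ a' b', SA a' ∧ SB b' ∧ ∃ w' : G.Walk a' b',
        (∀ e ∈ w'.edges, e ∉ c.edges) ∧ (∀ z ∈ w'.support, z ∈ w.support)) ∨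
      (∃ b', SB b' ∧ ∃ w' : G.Walk a b',
        (∀ e ∈ w'.edges, e ∉ c.edges) ∧ (∀ z ∈ w'.support, z ∈ w.support)) := by
    intro a b w
    induction w with
    | nil =>
      intro hb _
      exact Or.inr ⟨_, hb, Walk.nil, by simp, by simp⟩
    | @cons a a' b hadj' q ih =>
      intro hb hsup
      have hsup' : ∀ z ∈ q.support, z ≠ c.getVert i ∧ z ≠ c.getVert j := fun z hz =>
        hsup z (by rw [Walk.support_cons]; exact List.mem_cons_of_mem _ hz)
      rcases ih hb hsup' with ⟨a₁, b₁, hA1, hB1, w', hE, hS⟩ | ⟨b₁, hB1, w', hE, hS⟩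
      · refine Or.inl ⟨a₁, b₁, hA1, hB1, w', hE, fun z hz => ?_⟩
        rw [Walk.support_cons]; exact List.mem_cons_of_mem _ (hS z hz)
      · by_cases hce : s(a, a') ∈ c.edges
        · have haxy := hsup a (Walk.start_mem_support _)
          have ha'xy := hsup' a' (Walk.start_mem_support _)
          rcases ced a a' hce haxy.1 haxy.2 ha'xy.1 ha'xy.2 with ⟨_, hSAa'⟩ | ⟨hSBa, _⟩
          · refine Or.inl ⟨a', b₁, hSAa', hB1, w', hE, fun z hz => ?_⟩
            rw [Walk.support_cons]; exact List.mem_cons_of_mem _ (hS z hz)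
          · refine Or.inr ⟨a, hSBa, Walk.nil, by simp, fun z hz => ?_⟩
            rw [Walk.support_nil] at hz
            rw [Walk.support_cons]
            simp at hz
            subst hz
            exact List.mem_cons_self
        · refine Or.inr ⟨b₁, hB1, Walk.cons hadj' w', ?_, ?_⟩
          · intro e he
            rw [Walk.edges_cons, List.mem_cons] at he
            rcases he with rfl | he
            · exact hce
            · exact hE e he
          · intro z hz
            rw [Walk.support_cons, List.mem_cons] at hz ⊢
            rcases hz with rfl | hz
            · exact Or.inl rfl
            · exact Or.inr (hS z hz)
  -- endpoints distinct
  have hxyne : c.getVert i ≠ c.getVert j := fun h => by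
    have := inj (by omega) hjn h; omega
  have hconn := h3.2 {c.getVert i, c.getVert j} (by rw [Set.ncard_pair hxyne])
  -- starting vertex on side A
  have ha₀A : SA (c.getVert (i + 1)) := ⟨i + 1, by omega, by omega, rfl⟩
  have ha₀x : c.getVert (i + 1) ≠ c.getVert i := fun h => by
    have := inj (by omega) (by omega) h; omega
  have ha₀y : c.getVert (i + 1) ≠ c.getVert j := fun h => by
    have := inj (by omega) (by omega) h; omega
  have ha₀mem : c.getVert (i + 1) ∈ ({c.getVert i, c.getVert j}ᶜ : Set V) := by
    simp only [Set.mem_compl_iff, Set.mem_insert_iff, Set.mem_singleton_iff]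
    push_neg
    exact ⟨ha₀x, ha₀y⟩
  -- ending vertex on side B
  obtain ⟨t₀, ht₀n, ht₀or, hb₀x, hb₀y⟩ : ∃ t₀, t₀ < c.length ∧ (t₀ < i ∨ j < t₀) ∧
      c.getVert t₀ ≠ c.getVert i ∧ c.getVert t₀ ≠ c.getVert j := by
    rcases hB with h0i | hjn2
    · refine ⟨0, by omega, Or.inl h0i, fun h => ?_, fun h => ?_⟩ <;>
        [skip; skip] <;> (first
          | (have := inj (by omega : (0:ℕ) < c.length) (by omega : i < c.length) h; omega)
          | (have := inj (by omega : (0:ℕ) < c.length) (by omega : j < c.length) h; omega))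
    · refine ⟨j + 1, by omega, Or.inr (by omega), fun h => ?_, fun h => ?_⟩
      · have := inj (by omega) (by omega : i < c.length) h; omega
      · have := inj (by omega) (by omega : j < c.length) h; omega
  have hb₀B : SB (c.getVert t₀) := ⟨t₀, ht₀n, ht₀or, rfl⟩
  have hb₀mem : c.getVert t₀ ∈ ({c.getVert i, c.getVert j}ᶜ : Set V) := by
    simp only [Set.mem_compl_iff, Set.mem_insert_iff, Set.mem_singleton_iff]
    push_neg
    exact ⟨hb₀x, hb₀y⟩
  obtain ⟨wI⟩ := hconn.preconnected ⟨_, ha₀mem⟩ ⟨_, hb₀mem⟩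
  let wG : G.Walk (c.getVert (i + 1)) (c.getVert t₀) :=
    wI.map (SimpleGraph.Embedding.induce _).toHom
  have hwGsup : ∀ z ∈ wG.support, z ≠ c.getVert i ∧ z ≠ c.getVert j := by
    intro z hz
    change z ∈ (wI.map (SimpleGraph.Embedding.induce _).toHom).support at hz
    rw [Walk.support_map, List.mem_map] at hz
    obtain ⟨⟨z', hz'⟩, _, rfl⟩ := hz
    simp only [Set.mem_compl_iff, Set.mem_insert_iff, Set.mem_singleton_iff] at hz'
    push_neg at hz'
    exact hz'
  obtain ⟨a', b', hA', hB', w', hE', hS'⟩ : ∃ a' b', SA a' ∧ SB b' ∧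
      ∃ w' : G.Walk a' b', (∀ e ∈ w'.edges, e ∉ c.edges) ∧
        (∀ z ∈ w'.support, z ≠ c.getVert i ∧ z ≠ c.getVert j) := by
    rcases M _ _ wG hb₀B hwGsup with ⟨a', b', hA, hBb, w', hE, hS⟩ | ⟨b', hBb, w', hE, hS⟩
    · exact ⟨a', b', hA, hBb, w', hE, fun z hz => hwGsup z (hS z hz)⟩
    · exact ⟨_, b', ha₀A, hBb, w', hE, fun z hz => hwGsup z (hS z hz)⟩
  -- make it a path in G - E(c)
  have hEp : ∀ e ∈ (w'.toPath : G.Walk a' b').edges, e ∉ {e : Sym2 V | e ∈ c.edges} :=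
    fun e he => hE' e (Walk.edges_toPath_subset w' he)
  let pd : (G.deleteEdges {e : Sym2 V | e ∈ c.edges}).Walk a' b' :=
    (w'.toPath : G.Walk a' b').toDeleteEdges _ hEp
  have hpd : pd.IsPath := by
    apply Walk.IsPath.toDeleteEdges
    exact w'.toPath.2
  have hpdsup : ∀ z ∈ pd.support, z ≠ c.getVert i ∧ z ≠ c.getVert j := by
    intro z hz
    apply hS'
    have hts : pd.support = (w'.toPath : G.Walk a' b').support := Walk.support_transfer _ _
    rw [hts] at hz
    exact Walk.support_toPath_subset w' hz
  -- the chord as a one-edge path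
  have hchord : (G.deleteEdges {e : Sym2 V | e ∈ c.edges}).Adj (c.getVert i) (c.getVert j) := by
    rw [SimpleGraph.deleteEdges_adj]
    exact ⟨hadj, hne⟩
  let qc : (G.deleteEdges {e : Sym2 V | e ∈ c.edges}).Walk (c.getVert i) (c.getVert j) :=
    Walk.cons hchord Walk.nil
  have hqc : qc.IsPath := Walk.IsPath.nil.cons (by simp [hxyne])
  have hqcsup : qc.support = [c.getVert i, c.getVert j] := rfl
  obtain ⟨s, hs1, hs2, rfl⟩ := hA'
  obtain ⟨t, htn, htor, rfl⟩ := hB'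
  apply hni
  rcases htor with hti | hjt
  · refine ⟨t, i, s, j, hti, hs1, hs2, hjn, pd.reverse, qc, hpd.reverse, hqc, ?_⟩
    intro z hz
    rw [Walk.support_reverse] at hz
    rw [hqcsup]
    have := hpdsup z (by simpa using hz)
    simp [this.1, this.2]
  · refine ⟨i, s, j, t, hs1, hs2, hjt, htn, qc, pd, hqc, hpd, ?_⟩
    intro z hz hz'
    have := hpdsup z hz'
    rw [hqcsup] at hz
    simp at hz
    rcases hz with rfl | rfl
    · exact this.1 rfl
    · exact this.2 rfl


end Aux

theorem noninterleaved_cycle_is_induced {V : Type*} [Fintype V] [DecidableEq V]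
    (G : SimpleGraph V) [DecidableRel G.Adj] (h3 : ThreeConnected G)
    (v : V) (c : G.Walk v v) (hc : c.IsCycle) (hni : ¬ IsInterleaved G c) :
    ∀ x ∈ c.support, ∀ y ∈ c.support, G.Adj x y → s(x, y) ∈ c.edges := by
  intro x hx y hy hxy
  by_contra hne
  have hn3 : 3 ≤ c.length := hc.three_le_length
  obtain ⟨i, hi, rfl⟩ := exists_getVert_lt (by omega) hx
  obtain ⟨j, hj, rfl⟩ := exists_getVert_lt (by omega) hy
  rcases lt_trichotomy i j with h | h | h
  · exact key G h3 v c hc hni i j h hj hxy hne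
  · rw [h] at hxy; exact hxy.ne rfl
  · exact key G h3 v c hc hni j i h hi hxy.symm
      (fun hm => hne (by rwa [Sym2.eq_swap] at hm))

end BondPolytope
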